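/- Let G be a connected bipartite graph of order at least 4 with parts U and W satisfying |U| = |W|. Then λ(Ḡ) ≤ λ(G). -/

import Mathlib

noncomputable section
open Classical

variable {V : Type*}

/-- `S` is a distinguishing set of `G`. -/
def IsDistinguishing (G : SimpleGraph V) (S : Set V) : Prop :=
  ∀ u ∉ S, ∀ v ∉ S, u ≠ v → G.neighborSet u ∩ S ≠ G.neighborSet v ∩ S

/-- `S` is a dominating set of `G`. -/
def IsDominating (G : SimpleGraph V) (S : Set V) : Prop :=
  ∀ v ∉ S, ∃ u ∈ S, G.Adj v u

/-- `S` is a locating-dominating set of `G`. -/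
def IsLD (G : SimpleGraph V) (S : Set V) : Prop :=
  IsDistinguishing G S ∧ IsDominating G S

/-- The location-domination number of `G`. -/
def ldNum (G : SimpleGraph V) : ℕ :=
  sInf {n | ∃ S : Set V, S.ncard = n ∧ IsLD G S}

/-- The graph `G^S` associated with a distinguishing set `S`:
vertices outside `S` are adjacent iff their neighborhoods in `S`
differ in exactly one vertex (the label of the edge). -/
def assocGraph (G : SimpleGraph V) (S : Set V) : SimpleGraph V where
  Adj x y := x ∉ S ∧ y ∉ S ∧
    ∃ u, symmDiff (G.neighborSet x ∩ S) (G.neighborSet y ∩ S) = {u}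
  symm := by
    constructor
    rintro x y ⟨hx, hy, u, hu⟩
    exact ⟨hy, hx, u, by rwa [symmDiff_comm]⟩
  loopless := by
    constructor
    rintro x ⟨-, -, u, hu⟩
    rw [symmDiff_self] at hu
    exact (Set.singleton_ne_empty u) (by simpa using hu.symm)

/-- The edge `e` of `G^S` has label `u`. -/
def edgeLabelIs (G : SimpleGraph V) (S : Set V) (u : V) (e : Sym2 V) : Prop :=
  Sym2.lift ⟨fun x y => symmDiff (G.neighborSet x ∩ S) (G.neighborSet y ∩ S) = {u},
    fun x y => by simp only []; rw [symmDiff_comm]⟩ e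

/-- The number of edges with label `u` in a list of edges (e.g. of a walk in `G^S`). -/
def labelCount (G : SimpleGraph V) (S : Set V) (u : V) (l : List (Sym2 V)) : ℕ :=
  l.countP fun e => decide (edgeLabelIs G S u e)

/-- No edge of `H` lies on two distinct cycles: any two cycles sharing an edge
have the same edge set.  (This says precisely that every connected component of
`H` is a cactus.) -/
def NoEdgeOnTwoCycles {α : Type*} (H : SimpleGraph α) : Prop :=
  ∀ (x y : α) (p : H.Walk x x) (q : H.Walk y y), p.IsCycle → q.IsCycle →
    ∀ e ∈ p.edges, e ∈ q.edges → ∀ e', e' ∈ p.edges ↔ e' ∈ q.edges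

/-- A cactus is a connected graph in which no edge lies on two distinct cycles. -/
def IsCactus {α : Type*} (H : SimpleGraph α) : Prop :=
  H.Connected ∧ NoEdgeOnTwoCycles H

/-- `x` and `y` are twins in `G`. -/
def Twins (G : SimpleGraph V) (x y : V) : Prop :=
  G.neighborSet x = G.neighborSet y ∨
    G.neighborSet x ∪ {x} = G.neighborSet y ∪ {y}

/-- `x` and `y` are twins in the vertex-deleted graph `G - u`. -/
def TwinsAvoid (G : SimpleGraph V) (u x y : V) : Prop :=
  G.neighborSet x \ {u} = G.neighborSet y \ {u} ∨
    (G.neighborSet x ∪ {x}) \ {u} = (G.neighborSet y ∪ {y}) \ {u}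

/-- `U, W` is a bipartition of `G` into two stable (independent) sets. -/
def BipartitionOf (G : SimpleGraph V) (U W : Set V) : Prop :=
  U ∪ W = Set.univ ∧ Disjoint U W ∧
    (∀ x ∈ U, ∀ y ∈ U, ¬ G.Adj x y) ∧ (∀ x ∈ W, ∀ y ∈ W, ¬ G.Adj x y)

private lemma chi_sub_single' {A B : Set V} {w : V}
    (h : symmDiff A B = {w}) :
    (fun v => if v ∈ A then (1:ZMod 2) else 0) - (fun v => if v ∈ B then (1:ZMod 2) else 0)
      = Pi.single w 1 := by
  classical
  funext v
  have hv : ((v ∈ A ∧ v ∉ B) ∨ (v ∈ B ∧ v ∉ A)) ↔ v = w := by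
    rw [← Set.mem_symmDiff, h, Set.mem_singleton_iff]
  simp only [Pi.sub_apply, Pi.single_apply]
  by_cases hvw : v = w
  · subst hvw
    rcases hv.mpr rfl with ⟨h1, h2⟩ | ⟨h1, h2⟩ <;> simp [h1, h2] <;> decide
  · have hn : ¬((v ∈ A ∧ v ∉ B) ∨ (v ∈ B ∧ v ∉ A)) := fun hh => hvw (hv.mp hh)
    push_neg at hn
    by_cases h1 : v ∈ A
    · have h2 := hn.1 h1
      simp [h1, h2, hvw]
    · have h2 : v ∉ B := fun h2 => h1 (hn.2 h2)
      simp [h1, h2, hvw]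

private lemma exists_no_label' [Fintype V] (U W : Set V)
    (heq : U.ncard = W.ncard) (hU : U.Nonempty) (f : V → Set V) :
    ∃ w0 ∈ W, ∀ x ∈ U, ∀ y ∈ U, symmDiff (f x) (f y) ≠ {w0} := by
  classical
  obtain ⟨u0, hu0⟩ := hU
  set χ : Set V → (V → ZMod 2) := fun A v => if v ∈ A then 1 else 0 with hχ
  set g : V → (V → ZMod 2) := fun x => χ (f x) - χ (f u0) with hg
  set D : Finset (V → ZMod 2) := (U.toFinset.image g).erase 0 with hD
  set p : Submodule (ZMod 2) (V → ZMod 2) := Submodule.span (ZMod 2) (D : Set _) with hp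
  have hgmem : ∀ x ∈ U, g x ∈ p := by
    intro x hx
    by_cases h0 : g x = 0
    · rw [h0]; exact p.zero_mem
    · exact Submodule.subset_span
        (Finset.mem_erase.mpr ⟨h0, Finset.mem_image_of_mem g (Set.mem_toFinset.mpr hx)⟩)
  set L : Set V := {w | ∃ x ∈ U, ∃ y ∈ U, symmDiff (f x) (f y) = {w}} with hL
  have hLmem : ∀ w ∈ L, Pi.single w (1:ZMod 2) ∈ p := by
    rintro w ⟨x, hx, y, hy, hxy⟩
    have h1 := chi_sub_single' hxy
    have h2 : Pi.single w (1:ZMod 2) = g x - g y := by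
      rw [hg]; simp only []; rw [← h1]; abel
    rw [h2]
    exact sub_mem (hgmem x hx) (hgmem y hy)
  have hDcard : D.card ≤ U.ncard - 1 := by
    have h0 : (0:V → ZMod 2) ∈ U.toFinset.image g :=
      Finset.mem_image.mpr ⟨u0, Set.mem_toFinset.mpr hu0, by simp [hg]⟩
    calc D.card = (U.toFinset.image g).card - 1 := Finset.card_erase_of_mem h0
      _ ≤ U.toFinset.card - 1 := by
          have := Finset.card_image_le (s := U.toFinset) (f := g); omega
      _ = U.ncard - 1 := by rw [Set.ncard_eq_toFinset_card']
  have hrank : Module.finrank (ZMod 2) p ≤ U.ncard - 1 :=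
    le_trans (finrank_span_finset_le_card D) hDcard
  by_contra hcon
  push_neg at hcon
  have hWL : W ⊆ L := by
    intro w hw
    obtain ⟨x, hx, y, hy, hxy⟩ := hcon w hw
    exact ⟨x, hx, y, hy, hxy⟩
  have hli : LinearIndependent (ZMod 2)
      (fun w : L => (Pi.single (w:V) (1:ZMod 2) : V → ZMod 2)) := by
    have hb := (Pi.basisFun (ZMod 2) V).linearIndependent
    have h2 := hb.comp (fun w : L => (w : V)) Subtype.val_injective
    convert h2 using 1
    funext w; simp [Pi.basisFun_apply]
  have hli2 : LinearIndependent (ZMod 2)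
      (fun w : L => (⟨Pi.single (w:V) 1, hLmem w w.2⟩ : p)) := by
    apply LinearIndependent.of_comp p.subtype
    convert hli using 1
    funext w; rfl
  have hLfin : L.Finite := Set.toFinite L
  haveI : Fintype L := hLfin.fintype
  have hcard : L.ncard ≤ Module.finrank (ZMod 2) p := by
    rw [Set.ncard_eq_toFinset_card', Set.toFinset_card]
    exact hli2.fintype_card_le_finrank
  have h1 : W.ncard ≤ L.ncard := Set.ncard_le_ncard hWL hLfin
  have hpos : 0 < U.ncard := (Set.ncard_pos U.toFinite).mpr ⟨u0, hu0⟩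
  omega

private lemma symmDiff_singleton_of' {A B : Set V} {w : V}
    (h : A \ {w} = B \ {w}) (hne : A ≠ B) : symmDiff A B = {w} := by
  have key : ∀ v, v ≠ w → (v ∈ A ↔ v ∈ B) := by
    intro v hv
    constructor
    · intro hvA
      have : v ∈ A \ {w} := ⟨hvA, hv⟩
      rw [h] at this; exact this.1
    · intro hvB
      have : v ∈ B \ {w} := ⟨hvB, hv⟩
      rw [← h] at this; exact this.1
  have hw : ¬(w ∈ A ↔ w ∈ B) := by
    intro hiff
    apply hne
    ext v
    by_cases hv : v = w
    · subst hv; exact hiff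
    · exact key v hv
  ext v
  rw [Set.mem_symmDiff, Set.mem_singleton_iff]
  by_cases hv : v = w
  · subst hv
    constructor
    · intro _; rfl
    · intro _
      by_cases h1 : v ∈ A
      · exact Or.inl ⟨h1, fun h2 => hw ⟨fun _ => h2, fun _ => h1⟩⟩
      · refine Or.inr ⟨?_, h1⟩
        by_contra h2
        exact hw ⟨fun ha => absurd ha h1, fun hb => absurd hb h2⟩
  · have hk := key v hv
    constructor
    · rintro (⟨h1, h2⟩ | ⟨h1, h2⟩)
      · exact absurd (hk.mp h1) h2
      · exact absurd (hk.mpr h1) h2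
    · intro hh; exact absurd hh hv

private lemma compl_nbhd_inter {G : SimpleGraph V} {S : Set V} {z : V} (hz : z ∉ S) :
    Gᶜ.neighborSet z ∩ S = S \ G.neighborSet z := by
  ext u
  simp only [Set.mem_inter_iff, Set.mem_diff, SimpleGraph.mem_neighborSet,
    SimpleGraph.compl_adj]
  constructor
  · rintro ⟨⟨_, hna⟩, hu⟩; exact ⟨hu, hna⟩
  · rintro ⟨hu, hna⟩; exact ⟨⟨fun h => hz (h ▸ hu), hna⟩, hu⟩

private lemma inter_of_sdiff_eq {A B S : Set V} (h : S \ A = S \ B) :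
    A ∩ S = B ∩ S := by
  ext x
  simp only [Set.mem_inter_iff]
  constructor
  · rintro ⟨hxA, hxS⟩
    refine ⟨?_, hxS⟩
    by_contra hxB
    have : x ∈ S \ B := ⟨hxS, hxB⟩
    rw [← h] at this; exact this.2 hxA
  · rintro ⟨hxB, hxS⟩
    refine ⟨?_, hxS⟩
    by_contra hxA
    have : x ∈ S \ A := ⟨hxS, hxA⟩
    rw [h] at this; exact this.2 hxB

private lemma ldA {V : Type*} [Fintype V] (G : SimpleGraph V) (U W : Set V)
    (hbip : BipartitionOf G U W) (hconn : G.Connected) (h4 : 4 ≤ Fintype.card V)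
    (heq : U.ncard = W.ncard)
    (hdist : ∀ x ∈ U, ∀ y ∈ U, x ≠ y → G.neighborSet x ≠ G.neighborSet y) :
    ∃ S' : Set V, S'.ncard = W.ncard ∧ IsLD Gᶜ S' := by
  classical
  obtain ⟨hUW, hdisj, hUind, hWind⟩ := hbip
  have hmem : ∀ v : V, v ∈ U ∨ v ∈ W := by
    intro v
    have : v ∈ U ∪ W := hUW ▸ Set.mem_univ v
    exact this
  have hNU : ∀ x ∈ U, G.neighborSet x ⊆ W := by
    intro x hx u hu
    rcases hmem u with h | h
    · exact absurd hu (hUind x hx u h)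
    · exact h
  have hNW : ∀ x ∈ W, G.neighborSet x ⊆ U := by
    intro x hx u hu
    rcases hmem u with h | h
    · exact h
    · exact absurd hu (hWind x hx u h)
  have hcardV : Fintype.card V = U.ncard + W.ncard := by
    have h1 : (Set.univ : Set V).ncard = Fintype.card V := by
      rw [Set.ncard_univ, Nat.card_eq_fintype_card]
    rw [← h1, ← hUW, Set.ncard_union_eq hdisj]
  have hW2 : 2 ≤ W.ncard := by omega
  have hUne : U.Nonempty := (Set.ncard_pos U.toFinite).mp (by omega)
  obtain ⟨w0, hw0W, hw0⟩ := exists_no_label' U W heq hUne (fun x => G.neighborSet x)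
  -- find a neighbor u0 of w0
  have hnbr : ∃ u, G.Adj w0 u := by
    obtain ⟨v, hv⟩ := Fintype.exists_ne_of_one_lt_card (by omega) w0
    obtain ⟨p⟩ := hconn.preconnected w0 v
    cases p with
    | nil => exact absurd rfl hv
    | cons h _ => exact ⟨_, h⟩
  obtain ⟨u0, hu0adj⟩ := hnbr
  have hu0U : u0 ∈ U := hNW w0 hw0W hu0adj
  have hu0W : u0 ∉ W := Set.disjoint_left.mp hdisj hu0U
  set S' : Set V := (W \ {w0}) ∪ {u0} with hS'
  have hcardS' : S'.ncard = W.ncard := by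
    rw [hS', Set.union_singleton,
      Set.ncard_insert_of_notMem (fun h => hu0W h.1) ((W.toFinite.diff)),
      Set.ncard_diff_singleton_of_mem hw0W]
    omega
  refine ⟨S', hcardS', ?_, ?_⟩
  · -- distinguishing
    intro a ha b hb hab hN
    rw [compl_nbhd_inter ha, compl_nbhd_inter hb] at hN
    have hN' : G.neighborSet a ∩ S' = G.neighborSet b ∩ S' := inter_of_sdiff_eq hN
    have hcases : ∀ z, z ∉ S' → z ∈ U ∨ z = w0 := by
      intro z hz
      rcases hmem z with h | h
      · exact Or.inl h
      · right
        by_contra hzw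
        exact hz (Or.inl ⟨h, hzw⟩)
    have hUinter : ∀ x ∈ U, G.neighborSet x ∩ S' = G.neighborSet x \ {w0} := by
      intro x hx
      rw [hS', Set.inter_union_distrib_left]
      have h1 : G.neighborSet x ∩ {u0} = ∅ := by
        ext u
        simp only [Set.mem_inter_iff, Set.mem_singleton_iff, Set.mem_empty_iff_false,
          iff_false, not_and, SimpleGraph.mem_neighborSet]
        intro hadj hequ
        rw [hequ] at hadj
        exact hUind x hx u0 hu0U hadj
      have h2 : G.neighborSet x ∩ (W \ {w0}) = G.neighborSet x \ {w0} := by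
        ext u
        simp only [Set.mem_inter_iff, Set.mem_diff, Set.mem_singleton_iff]
        constructor
        · rintro ⟨h3, _, h5⟩; exact ⟨h3, h5⟩
        · rintro ⟨h3, h5⟩; exact ⟨h3, hNU x hx h3, h5⟩
      rw [h1, h2, Set.union_empty]
    have hw0u0 : ∀ x ∈ U, G.neighborSet x ∩ S' ≠ G.neighborSet w0 ∩ S' := by
      intro x hx hcontra
      have hu0mem : u0 ∈ G.neighborSet w0 ∩ S' :=
        ⟨hu0adj, Or.inr rfl⟩
      rw [← hcontra] at hu0mem
      exact hUind x hx u0 hu0U hu0mem.1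
    rcases hcases a ha with haU | haw <;> rcases hcases b hb with hbU | hbw
    · -- both in U
      rw [hUinter a haU, hUinter b hbU] at hN'
      have hne : G.neighborSet a ≠ G.neighborSet b := hdist a haU b hbU hab
      exact hw0 a haU b hbU (symmDiff_singleton_of' hN' hne)
    · subst hbw; exact hw0u0 a haU hN'
    · subst haw; exact hw0u0 b hbU hN'.symm
    · subst haw; subst hbw; exact hab rfl
  · -- dominating
    intro x hx
    rcases hmem x with hxU | hxW
    · refine ⟨u0, Or.inr rfl, ?_⟩
      rw [SimpleGraph.compl_adj]
      refine ⟨fun h => hx (h ▸ Or.inr rfl), hUind x hxU u0 hu0U⟩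
    · have hxw0 : x = w0 := by
        by_contra h
        exact hx (Or.inl ⟨hxW, h⟩)
      have hWne : (W \ {w0}).Nonempty := by
        have h5 : (W \ {w0}).ncard = W.ncard - 1 :=
          Set.ncard_diff_singleton_of_mem hw0W
        exact (Set.ncard_pos (W.toFinite.diff)).mp (by omega)
      obtain ⟨w1, hw1W, hw1ne⟩ := hWne
      refine ⟨w1, Or.inl ⟨hw1W, hw1ne⟩, ?_⟩
      rw [SimpleGraph.compl_adj]
      exact ⟨fun h => hw1ne (Set.mem_singleton_iff.mpr (h.symm.trans hxw0)),
        hWind x hxW w1 hw1W⟩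

theorem ldNum_compl_le_of_equal_parts [Fintype V] (G : SimpleGraph V) (U W : Set V)
    (hbip : BipartitionOf G U W) (hconn : G.Connected)
    (h4 : 4 ≤ Fintype.card V) (heq : U.ncard = W.ncard) :
    ldNum Gᶜ ≤ ldNum G := by
  classical
  have hne : {n | ∃ S : Set V, S.ncard = n ∧ IsLD G S}.Nonempty :=
    ⟨(Set.univ : Set V).ncard, Set.univ, rfl,
      fun u hu => absurd (Set.mem_univ u) hu,
      fun v hv => absurd (Set.mem_univ v) hv⟩
  obtain ⟨S, hScard, hSdist, hSdom⟩ := Nat.sInf_mem hne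
  obtain ⟨hUW, hdisj, hUind, hWind⟩ := hbip
  have hmem : ∀ v : V, v ∈ U ∨ v ∈ W := by
    intro v
    have : v ∈ U ∪ W := hUW ▸ Set.mem_univ v
    exact this
  by_cases hdom : IsDominating Gᶜ S
  · -- S itself works for Gᶜ
    have hdist : IsDistinguishing Gᶜ S := by
      intro a ha b hb hab hN
      rw [compl_nbhd_inter ha, compl_nbhd_inter hb] at hN
      exact hSdist a ha b hb hab (inter_of_sdiff_eq hN)
    exact Nat.sInf_le ⟨S, hScard, hdist, hdom⟩
  · -- there is a vertex adjacent (in G) to everything in S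
    rw [IsDominating] at hdom
    push_neg at hdom
    obtain ⟨v, hvS, hv⟩ := hdom
    have hvadj : ∀ u ∈ S, G.Adj v u := by
      intro u hu
      have h1 := hv u hu
      rw [SimpleGraph.compl_adj] at h1
      push_neg at h1
      by_contra h2
      exact h2 (h1 (fun h => hvS (h ▸ hu)))
    have key : ∀ (U' W' : Set V), (∀ x ∈ U', ∀ y ∈ U', ¬ G.Adj x y) →
        (∀ x ∈ W', ∀ y ∈ W', ¬ G.Adj x y) → (∀ z : V, z ∈ U' ∨ z ∈ W') →
        Disjoint U' W' → v ∈ U' → S = W' := by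
      intro U' W' hU'ind hW'ind hmem' hdisj' hvU'
      have hSW' : S ⊆ W' := by
        intro u hu
        rcases hmem' u with h | h
        · exact absurd (hvadj u hu) (hU'ind v hvU' u h)
        · exact h
      have hW'S : W' ⊆ S := by
        intro w hw
        by_contra hwS
        obtain ⟨u, huS, hadj⟩ := hSdom w hwS
        exact hW'ind w hw u (hSW' huS) hadj
      exact Set.Subset.antisymm hSW' hW'S
    have main : ∀ (U' W' : Set V), BipartitionOf G U' W' → U'.ncard = W'.ncard →
        S = W' → ldNum Gᶜ ≤ ldNum G := by
      intro U' W' hbip' heq' hSW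
      obtain ⟨hUW', hdisj', hU'ind, hW'ind⟩ := hbip'
      have hmem' : ∀ z : V, z ∈ U' ∨ z ∈ W' := by
        intro z
        have : z ∈ U' ∪ W' := hUW' ▸ Set.mem_univ z
        exact this
      have hNU' : ∀ x ∈ U', G.neighborSet x ⊆ W' := by
        intro x hx u hu
        rcases hmem' u with h | h
        · exact absurd hu (hU'ind x hx u h)
        · exact h
      have hdist' : ∀ x ∈ U', ∀ y ∈ U', x ≠ y →
          G.neighborSet x ≠ G.neighborSet y := by
        intro x hx y hy hxy hcontra
        have hxS : x ∉ S := fun h => (Set.disjoint_left.mp hdisj' hx) (hSW ▸ h)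
        have hyS : y ∉ S := fun h => (Set.disjoint_left.mp hdisj' hy) (hSW ▸ h)
        apply hSdist x hxS y hyS hxy
        rw [hSW, hcontra]
      obtain ⟨S', hS'card, hS'LD⟩ :=
        ldA G U' W' ⟨hUW', hdisj', hU'ind, hW'ind⟩ hconn h4 heq' hdist'
      have hval : S'.ncard = ldNum G := by
        unfold ldNum
        rw [hS'card, ← hSW]
        exact hScard
      exact Nat.sInf_le ⟨S', hval, hS'LD⟩
    rcases hmem v with hvU | hvW
    · exact main U W ⟨hUW, hdisj, hUind, hWind⟩ heq
        (key U W hUind hWind hmem hdisj hvU)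
    · have hmem2 : ∀ z : V, z ∈ W ∨ z ∈ U := fun z => (hmem z).symm
      exact main W U ⟨by rw [Set.union_comm]; exact hUW, hdisj.symm, hWind, hUind⟩
        heq.symm (key W U hWind hUind hmem2 hdisj.symm hvW)

end
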